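/- Consider an L-layer ReLU network with link-normalized weights ‖W_ℓ‖_{1} ≤ 1, original outputs Y^{(ℓ)} = max(W_ℓᵀ Y^{(ℓ−1)}, 0) with Y^{(0)} = X. Suppose the retrained matrices satisfy: ‖Ŷ^{(1)} − Y^{(1)}‖_F ≤ ε_1, and for ℓ ≥ 2, Ŵ_ℓ is feasible for the cascade constraint set C_{ε_ℓ}(Ŷ^{(ℓ−1)}, Y^{(ℓ)}, W_ℓᵀ Ŷ^{(ℓ−1)}), i.e., ∑_{(m,p): y^{(ℓ)}_{m,p}>0} (ŵ_{ℓ,m}ᵀ ŷ^{(ℓ−1)}_p − y^{(ℓ)}_{m,p})² ≤ ε_ℓ² and ŵ_{ℓ,m}ᵀ ŷ^{(ℓ−1)}_p ≤ w_{ℓ,m}ᵀ ŷ^{(ℓ−1)}_p whenever y^{(ℓ)}_{m,p} = 0, where ε_ℓ² = γ_ℓ ∑_{(m,p): y^{(ℓ)}_{m,p}>0} (w_{ℓ,m}ᵀ ŷ^{(ℓ−1)}_p − y^{(ℓ)}_{m,p})² with γ_ℓ > 1. Then with Ŷ^{(ℓ)} = max(Ŵ_ℓᵀ Ŷ^{(ℓ−1)},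 0), for every ℓ: ‖Ŷ^{(ℓ)} − Y^{(ℓ)}‖_F ≤ ε_1 √(∏_{j=2}^ℓ γ_j). -/

import Mathlib

open Finset

lemma cs_aux {n : ℕ} (w x : Fin n → ℝ) :
    (∑ k, w k * x k) ^ 2 ≤ (∑ k, |w k|) * (∑ k, |w k| * x k ^ 2) := by
  have h1 : (∑ k, w k * x k) ^ 2 ≤ (∑ k, |w k| * |x k|) ^ 2 := by
    have := Finset.abs_sum_le_sum_abs (fun k => w k * x k) Finset.univ
    have h2 : |∑ k, w k * x k| ≤ ∑ k, |w k| * |x k| := by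
      simpa [abs_mul] using this
    calc (∑ k, w k * x k) ^ 2 = |∑ k, w k * x k| ^ 2 := by rw [sq_abs]
      _ ≤ (∑ k, |w k| * |x k|) ^ 2 := by
          apply pow_le_pow_left₀ (abs_nonneg _) h2
  refine h1.trans ?_
  have key := Finset.sum_mul_sq_le_sq_mul_sq Finset.univ
    (fun k => Real.sqrt |w k|) (fun k => Real.sqrt |w k| * |x k|)
  have e1 : ∀ k : Fin n, Real.sqrt |w k| * (Real.sqrt |w k| * |x k|) = |w k| * |x k| := by
    intro k
    rw [← mul_assoc, Real.mul_self_sqrt (abs_nonneg _)]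
  have e2 : ∀ k : Fin n, Real.sqrt |w k| ^ 2 = |w k| := fun k => Real.sq_sqrt (abs_nonneg _)
  have e3 : ∀ k : Fin n, (Real.sqrt |w k| * |x k|) ^ 2 = |w k| * x k ^ 2 := by
    intro k
    rw [mul_pow, Real.sq_sqrt (abs_nonneg _), sq_abs]
  simp only [e1, e2, e3] at key
  exact key

lemma normA {dk dm P' : ℕ} (Wl : Matrix (Fin dk) (Fin dm) ℝ)
    (D : Matrix (Fin dk) (Fin P') ℝ) (hW : ∑ i, ∑ j, |Wl i j| ≤ 1) :
    ∑ m, ∑ p, (∑ k, Wl k m * D k p) ^ 2 ≤ ∑ k, ∑ p, D k p ^ 2 := by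
  set S : Fin dk → ℝ := fun k => ∑ p, D k p ^ 2 with hS
  have hSnn : ∀ k, 0 ≤ S k := fun k => Finset.sum_nonneg fun p _ => sq_nonneg _
  have hStot : ∀ k, S k ≤ ∑ k', S k' := fun k =>
    Finset.single_le_sum (fun k' _ => hSnn k') (Finset.mem_univ k)
  have ham : ∀ m : Fin dm, ∑ k, |Wl k m| ≤ 1 := by
    intro m
    calc ∑ k, |Wl k m| ≤ ∑ i, ∑ j, |Wl i j| :=
          Finset.sum_le_sum fun i _ =>
            Finset.single_le_sum (f := fun j => |Wl i j|) (fun j _ => abs_nonneg _)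
              (Finset.mem_univ m)
      _ ≤ 1 := hW
  have h1 : ∀ m : Fin dm, ∑ p, (∑ k, Wl k m * D k p) ^ 2 ≤ ∑ k, |Wl k m| * S k := by
    intro m
    calc ∑ p, (∑ k, Wl k m * D k p) ^ 2
        ≤ ∑ p, (∑ k, |Wl k m|) * (∑ k, |Wl k m| * D k p ^ 2) := by
          exact Finset.sum_le_sum fun p _ => cs_aux (fun k => Wl k m) (fun k => D k p)
      _ ≤ ∑ p, 1 * (∑ k, |Wl k m| * D k p ^ 2) := by
          refine Finset.sum_le_sum fun p _ => ?_
          apply mul_le_mul_of_nonneg_right (ham m)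
          exact Finset.sum_nonneg fun k _ => mul_nonneg (abs_nonneg _) (sq_nonneg _)
      _ = ∑ p, ∑ k, |Wl k m| * D k p ^ 2 := by simp only [one_mul]
      _ = ∑ k, ∑ p, |Wl k m| * D k p ^ 2 := Finset.sum_comm
      _ = ∑ k, |Wl k m| * S k := by simp [hS, Finset.mul_sum]
  calc ∑ m, ∑ p, (∑ k, Wl k m * D k p) ^ 2
      ≤ ∑ m, ∑ k, |Wl k m| * S k := Finset.sum_le_sum fun m _ => h1 m
    _ ≤ ∑ m, ∑ k, |Wl k m| * (∑ k', S k') := by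
        refine Finset.sum_le_sum fun m _ => Finset.sum_le_sum fun k _ => ?_
        exact mul_le_mul_of_nonneg_left (hStot k) (abs_nonneg _)
    _ = (∑ m, ∑ k, |Wl k m|) * (∑ k', S k') := by
        rw [Finset.sum_mul]
        congr 1
        ext m
        rw [Finset.sum_mul]
    _ ≤ 1 * (∑ k', S k') := by
        apply mul_le_mul_of_nonneg_right _ (Finset.sum_nonneg fun k _ => hSnn k)
        rw [Finset.sum_comm]
        exact hW
    _ = ∑ k, ∑ p, D k p ^ 2 := by rw [one_mul]

lemma step_lemma {dk dm P' : ℕ} (Wl Whatl : Matrix (Fin dk) (Fin dm) ℝ)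
    (Yl Yhatl : Matrix (Fin dk) (Fin P') ℝ)
    (Ynext Yhatnext : Matrix (Fin dm) (Fin P') ℝ) (γl : ℝ) (hγ : 1 ≤ γl)
    (hY : ∀ m p, Ynext m p = max (∑ k, Wl k m * Yl k p) 0)
    (hYh : ∀ m p, Yhatnext m p = max (∑ k, Whatl k m * Yhatl k p) 0)
    (hW : ∑ i, ∑ j, |Wl i j| ≤ 1)
    (hf1 : ∑ m, ∑ p, (if 0 < Ynext m p then
        (∑ k, Whatl k m * Yhatl k p - Ynext m p) ^ 2 else 0) ≤
      γl * ∑ m, ∑ p, (if 0 < Ynext m p then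
        (∑ k, Wl k m * Yhatl k p - Ynext m p) ^ 2 else 0))
    (hf2 : ∀ m p, Ynext m p = 0 →
      ∑ k, Whatl k m * Yhatl k p ≤ ∑ k, Wl k m * Yhatl k p) :
    ∑ m, ∑ p, (Yhatnext m p - Ynext m p) ^ 2 ≤
      γl * ∑ m, ∑ p, (Yhatl m p - Yl m p) ^ 2 := by
  set Q : Fin dm → Fin P' → ℝ := fun m p => ∑ k, Wl k m * (Yhatl k p - Yl k p) with hQ
  have hQeq : ∀ m p, Q m p = (∑ k, Wl k m * Yhatl k p) - ∑ k, Wl k m * Yl k p := by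
    intro m p
    simp [hQ, mul_sub, Finset.sum_sub_distrib]
  have hYnn : ∀ m p, 0 ≤ Ynext m p := fun m p => by rw [hY m p]; exact le_max_right _ _
  -- entrywise bound
  have hentry : ∀ m p, (Yhatnext m p - Ynext m p) ^ 2 ≤
      (if 0 < Ynext m p then (∑ k, Whatl k m * Yhatl k p - Ynext m p) ^ 2 else 0)
        + (if 0 < Ynext m p then 0 else Q m p ^ 2) := by
    intro m p
    by_cases h : 0 < Ynext m p
    · simp only [h, if_true, add_zero]
      have : |Yhatnext m p - Ynext m p| ≤ |(∑ k, Whatl k m * Yhatl k p) - Ynext m p| := by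
        rw [hYh m p]
        have := abs_max_sub_max_le_abs (∑ k, Whatl k m * Yhatl k p) (Ynext m p) 0
        rwa [max_eq_left (hYnn m p)] at this
      calc (Yhatnext m p - Ynext m p) ^ 2 = |Yhatnext m p - Ynext m p| ^ 2 := (sq_abs _).symm
        _ ≤ |(∑ k, Whatl k m * Yhatl k p) - Ynext m p| ^ 2 :=
            pow_le_pow_left₀ (abs_nonneg _) this 2
        _ = _ := sq_abs _
    · simp only [h, if_false, zero_add]
      have h0 : Ynext m p = 0 := le_antisymm (not_lt.mp h) (hYnn m p)
      have hWY0 : max (∑ k, Wl k m * Yl k p) 0 = 0 := by rw [← hY m p]; exact h0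
      have hub : Yhatnext m p ≤ max (∑ k, Wl k m * Yhatl k p) 0 := by
        rw [hYh m p]
        exact max_le_max (hf2 m p h0) le_rfl
      have hnn : 0 ≤ Yhatnext m p := by rw [hYh m p]; exact le_max_right _ _
      have habs : |Yhatnext m p| ≤ |Q m p| := by
        rw [abs_of_nonneg hnn]
        refine hub.trans ?_
        have := abs_max_sub_max_le_abs (∑ k, Wl k m * Yhatl k p) (∑ k, Wl k m * Yl k p) 0
        rw [hWY0, sub_zero, ← hQeq m p] at this
        exact (le_abs_self _).trans this
      calc (Yhatnext m p - Ynext m p) ^ 2 = |Yhatnext m p| ^ 2 := by rw [h0, sub_zero, sq_abs]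
        _ ≤ |Q m p| ^ 2 := pow_le_pow_left₀ (abs_nonneg _) habs 2
        _ = Q m p ^ 2 := sq_abs _
  -- for positive entries, Ynext = wᵀ Y
  have hpos : ∀ m p, 0 < Ynext m p → Ynext m p = ∑ k, Wl k m * Yl k p := by
    intro m p h
    rcases max_cases (∑ k, Wl k m * Yl k p) 0 with ⟨h1, _⟩ | ⟨h1, h2⟩
    · rw [hY m p, h1]
    · exfalso; rw [hY m p, h1] at h; exact lt_irrefl 0 h
  calc ∑ m, ∑ p, (Yhatnext m p - Ynext m p) ^ 2
      ≤ ∑ m, ∑ p, ((if 0 < Ynext m p then (∑ k, Whatl k m * Yhatl k p - Ynext m p) ^ 2 else 0)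
          + (if 0 < Ynext m p then 0 else Q m p ^ 2)) :=
        Finset.sum_le_sum fun m _ => Finset.sum_le_sum fun p _ => hentry m p
    _ = (∑ m, ∑ p, (if 0 < Ynext m p then (∑ k, Whatl k m * Yhatl k p - Ynext m p) ^ 2 else 0))
          + ∑ m, ∑ p, (if 0 < Ynext m p then 0 else Q m p ^ 2) := by
        rw [← Finset.sum_add_distrib]
        congr 1; ext m; rw [← Finset.sum_add_distrib]
    _ ≤ (γl * ∑ m, ∑ p, (if 0 < Ynext m p then (∑ k, Wl k m * Yhatl k p - Ynext m p) ^ 2 else 0))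
          + ∑ m, ∑ p, (if 0 < Ynext m p then 0 else Q m p ^ 2) := by
        exact add_le_add hf1 le_rfl
    _ ≤ γl * ∑ m, ∑ p, Q m p ^ 2 := by
        simp only [Finset.mul_sum]
        rw [← Finset.sum_add_distrib]
        refine Finset.sum_le_sum fun m _ => ?_
        rw [← Finset.sum_add_distrib]
        refine Finset.sum_le_sum fun p _ => ?_
        by_cases h : 0 < Ynext m p
        · simp only [h, if_true, add_zero]
          have : (∑ k, Wl k m * Yhatl k p - Ynext m p) ^ 2 = Q m p ^ 2 := by
            rw [hQeq m p, hpos m p h]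
          rw [this]
        · simp only [h, if_false, mul_zero, zero_add]
          nlinarith [sq_nonneg (Q m p)]
    _ ≤ γl * ∑ m, ∑ p, (Yhatl m p - Yl m p) ^ 2 := by
        apply mul_le_mul_of_nonneg_left _ (le_trans zero_le_one hγ)
        exact normA Wl (fun k p => Yhatl k p - Yl k p) hW

/-- Theorem 2 (cascade Net-Trim): for a link-normalized network where the first layer is
retrained within `ε₁` and each subsequent layer `ℓ ≥ 2` is retrained feasibly for the
cascade constraint set with inflation rate `γ_ℓ > 1`, the error of the retrained network
at layer `ℓ` is at most `ε₁ √(∏_{j=2}^ℓ γ_j)`. -/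
theorem netTrim_cascade_error_bound
    (d : ℕ → ℕ) (P L : ℕ)
    (W What : (ℓ : ℕ) → Matrix (Fin (d ℓ)) (Fin (d (ℓ + 1))) ℝ)
    (Y Yhat : (ℓ : ℕ) → Matrix (Fin (d ℓ)) (Fin P) ℝ)
    (γ : ℕ → ℝ) (ε₁ : ℝ) (hε₁ : 0 ≤ ε₁)
    (hγ : ∀ ℓ, 2 ≤ ℓ → ℓ ≤ L → 1 < γ ℓ)
    (hY : ∀ ℓ < L, ∀ m p, Y (ℓ + 1) m p = max (∑ k, W ℓ k m * Y ℓ k p) 0)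
    (hYhat0 : Yhat 0 = Y 0)
    (hYhat : ∀ ℓ < L, ∀ m p, Yhat (ℓ + 1) m p = max (∑ k, What ℓ k m * Yhat ℓ k p) 0)
    (hWnorm : ∀ ℓ < L, ∑ i, ∑ j, |W ℓ i j| ≤ 1)
    (hfirst : Real.sqrt (∑ m, ∑ p, (Yhat 1 m p - Y 1 m p) ^ 2) ≤ ε₁)
    (hfeas1 : ∀ ℓ, 1 ≤ ℓ → ℓ < L →
      ∑ m, ∑ p, (if 0 < Y (ℓ + 1) m p then
          (∑ k, What ℓ k m * Yhat ℓ k p - Y (ℓ + 1) m p) ^ 2 else 0) ≤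
        γ (ℓ + 1) *
          ∑ m, ∑ p, (if 0 < Y (ℓ + 1) m p then
            (∑ k, W ℓ k m * Yhat ℓ k p - Y (ℓ + 1) m p) ^ 2 else 0))
    (hfeas2 : ∀ ℓ, 1 ≤ ℓ → ℓ < L → ∀ m p, Y (ℓ + 1) m p = 0 →
      ∑ k, What ℓ k m * Yhat ℓ k p ≤ ∑ k, W ℓ k m * Yhat ℓ k p) :
    ∀ ℓ, 1 ≤ ℓ → ℓ ≤ L →
      Real.sqrt (∑ m, ∑ p, (Yhat ℓ m p - Y ℓ m p) ^ 2) ≤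
        ε₁ * Real.sqrt (∏ j ∈ Finset.Icc 2 ℓ, γ j) := by
  have key : ∀ ℓ, 1 ≤ ℓ → ℓ ≤ L →
      (∑ m, ∑ p, (Yhat ℓ m p - Y ℓ m p) ^ 2) ≤ ε₁ ^ 2 * ∏ j ∈ Finset.Icc 2 ℓ, γ j := by
    refine Nat.le_induction ?_ ?_
    · intro _
      have hicc : Finset.Icc 2 1 = (∅ : Finset ℕ) := Finset.Icc_eq_empty (by norm_num)
      rw [hicc, Finset.prod_empty, mul_one]
      have hnn : 0 ≤ ∑ m, ∑ p, (Yhat 1 m p - Y 1 m p) ^ 2 :=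
        Finset.sum_nonneg fun m _ => Finset.sum_nonneg fun p _ => sq_nonneg _
      calc ∑ m, ∑ p, (Yhat 1 m p - Y 1 m p) ^ 2
          = Real.sqrt (∑ m, ∑ p, (Yhat 1 m p - Y 1 m p) ^ 2) ^ 2 := (Real.sq_sqrt hnn).symm
        _ ≤ ε₁ ^ 2 := pow_le_pow_left₀ (Real.sqrt_nonneg _) hfirst 2
    · intro n h1n IH hnL
      have hn_lt : n < L := by omega
      have hγn : 1 < γ (n + 1) := hγ (n + 1) (by omega) hnL
      have hstep := step_lemma (W n) (What n) (Y n) (Yhat n) (Y (n + 1)) (Yhat (n + 1))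
        (γ (n + 1)) hγn.le (hY n hn_lt) (hYhat n hn_lt) (hWnorm n hn_lt)
        (hfeas1 n h1n hn_lt) (hfeas2 n h1n hn_lt)
      have hIH := IH (by omega)
      calc ∑ m, ∑ p, (Yhat (n + 1) m p - Y (n + 1) m p) ^ 2
          ≤ γ (n + 1) * ∑ m, ∑ p, (Yhat n m p - Y n m p) ^ 2 := hstep
        _ ≤ γ (n + 1) * (ε₁ ^ 2 * ∏ j ∈ Finset.Icc 2 n, γ j) :=
            mul_le_mul_of_nonneg_left hIH (by linarith)
        _ = ε₁ ^ 2 * ∏ j ∈ Finset.Icc 2 (n + 1), γ j := by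
            rw [Finset.prod_Icc_succ_top (by omega : 2 ≤ n + 1)]
            ring
  intro ℓ h1 h2
  have hE := key ℓ h1 h2
  calc Real.sqrt (∑ m, ∑ p, (Yhat ℓ m p - Y ℓ m p) ^ 2)
      ≤ Real.sqrt (ε₁ ^ 2 * ∏ j ∈ Finset.Icc 2 ℓ, γ j) := Real.sqrt_le_sqrt hE
    _ = ε₁ * Real.sqrt (∏ j ∈ Finset.Icc 2 ℓ, γ j) := by
        rw [Real.sqrt_mul (sq_nonneg ε₁), Real.sqrt_sq hε₁]
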